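/- Define rational numbers P_{k,j} := S_{k,j}(1)/g_j for integers k ≥ 0 and j ≥ 1, and set P_{k,0} := 0. Then for all k ≥ 0 and j ≥ 1 the recurrence P_{k+1,j} = j^2 (P_{k,j} − P_{k,j-1}) + j · P_{k,j-1} holds. -/

import Mathlib

/-- `S k j` is the sum `S_{k,j}(1) = ∑_{q=0}^{j-1} binom(2j, q) (j-q)^{2k+1}`. -/
def S (k j : ℕ) : ℕ :=
  ∑ q ∈ Finset.range j, Nat.choose (2 * j) q * (j - q) ^ (2 * k + 1)

/-- `g j = (j/(j-1)!) ∏_{q=1}^{j-1} (j+q)` as a rational number; `g 1 = 1`. -/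
def g (j : ℕ) : ℚ :=
  (j : ℚ) / (Nat.factorial (j - 1) : ℚ) * ∏ q ∈ Finset.Icc 1 (j - 1), ((j : ℚ) + (q : ℚ))

/-- `Pkj k j = S_{k,j}(1) / g_j` for `j ≥ 1`, and `Pkj k 0 = 0`. -/
def Pkj (k j : ℕ) : ℚ :=
  if j = 0 then 0 else (S k j : ℚ) / g j

/-- The key binomial identity `j² C(2j,q) = C(2j,q)(j-q)² + 2j(2j-1)C(2j-2,q-1)`,
written subtraction-free with `q = a+1`, `j = a+b+2`. -/
theorem choose_key (a b : ℕ) :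
    (a+b+2)^2 * Nat.choose (2*a+2*b+4) (a+1)
      = Nat.choose (2*a+2*b+4) (a+1) * (b+1)^2
        + 2*(a+b+2)*(2*a+2*b+3)*Nat.choose (2*a+2*b+2) a := by
  have h1 := Nat.add_one_mul_choose_eq (2*a+2*b+3) a
  have h2 := Nat.choose_mul_succ_eq (2*a+2*b+2) a
  rw [show 2*a+2*b+3+1 = 2*a+2*b+4 by ring] at h1
  rw [show 2*a+2*b+2+1 = 2*a+2*b+4-1 by omega, show 2*a+2*b+4-1-a = a+2*b+3 by omega] at h2
  rw [show 2*a+2*b+4-1 = 2*a+2*b+3 by omega] at h2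
  zify at h1 h2 ⊢
  linear_combination (-(a:ℤ)-2*b-3) * h1 - (2*a+2*b+4) * h2

/-- The key recurrence for the sums `S`. -/
theorem S_key (k n : ℕ) :
    S (k+1) (n+1) + 2*(n+1)*(2*n+1) * S k n = (n+1)^2 * S k (n+1) := by
  simp only [S, Finset.mul_sum]
  rw [Finset.sum_range_succ' (fun q => Nat.choose (2*(n+1)) q * (n+1-q) ^ (2*(k+1)+1)) n,
      Finset.sum_range_succ' (fun q => (n+1)^2 * (Nat.choose (2*(n+1)) q * (n+1-q) ^ (2*k+1))) n]
  rw [add_right_comm, ← Finset.sum_add_distrib]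
  congr 1
  · apply Finset.sum_congr rfl
    intro i hi
    rw [Finset.mem_range] at hi
    obtain ⟨b, rfl⟩ : ∃ b, n = i + b + 1 := ⟨n - i - 1, by omega⟩
    have e1 : i + b + 1 + 1 - (i+1) = b + 1 := by omega
    have e2 : i + b + 1 - i = b + 1 := by omega
    have e3 : 2*(i+b+1+1) = 2*i+2*b+4 := by ring
    have e4 : 2*(i+b+1) = 2*i+2*b+2 := by ring
    rw [e1, e2, e3, e4]
    have hc := choose_key i b
    zify at hc ⊢
    have : (2*(k+1)+1) = (2*k+1) + 2 := by ring
    rw [this, pow_add]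
    linear_combination (-((b:ℤ)+1)^(2*k+1)) * hc
  · simp
    ring

/-- The factorial form of the product appearing in `g`. -/
theorem prod_nat (n : ℕ) :
    Nat.factorial (n+1) * ∏ q ∈ Finset.Icc 1 n, (n + 1 + q) = Nat.factorial (2*n+1) := by
  have h1 : (Finset.Icc 1 n).map (addLeftEmbedding (n+1)) = Finset.Icc (n+2) (2*n+1) := by
    rw [Finset.map_add_left_Icc]
    congr 1 <;> omega
  have h2 : ∏ q ∈ Finset.Icc 1 n, (n + 1 + q) = ∏ i ∈ Finset.Ico (n+2) (2*n+2), i := by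
    rw [show Finset.Ico (n+2) (2*n+2) = Finset.Icc (n+2) (2*n+1) by rw [← Finset.Ico_add_one_right_eq_Icc]; rfl]
    rw [← h1, Finset.prod_map]
    rfl
  rw [h2, ← Finset.prod_Ico_id_eq_factorial (n+1), ← Finset.prod_Ico_id_eq_factorial (2*n+1)]
  exact Finset.prod_Ico_consecutive _ (by omega) (by omega)

/-- `g (n+1) = (2n+1)! / (n!)²`. -/
theorem g_eq (n : ℕ) :
    g (n+1) = (Nat.factorial (2*n+1) : ℚ) / ((Nat.factorial n : ℚ))^2 := by
  have h := prod_nat n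
  have hq : ((Nat.factorial (n+1) : ℚ)) * ∏ q ∈ Finset.Icc 1 n, ((n:ℚ) + 1 + q)
      = (Nat.factorial (2*n+1) : ℚ) := by
    exact_mod_cast congrArg (Nat.cast : ℕ → ℚ) h
  simp only [g, Nat.add_sub_cancel]
  have hf : (Nat.factorial (n+1) : ℚ) = (n+1) * Nat.factorial n := by
    rw [Nat.factorial_succ]; push_cast; ring
  rw [hf] at hq
  have h0 : (Nat.factorial n : ℚ) ≠ 0 := Nat.cast_ne_zero.mpr (Nat.factorial_ne_zero n)
  have h1 : ((n:ℚ)+1) ≠ 0 := by positivity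
  push_cast
  have hp : (∏ q ∈ Finset.Icc 1 n, ((n:ℚ) + 1 + q))
      = (Nat.factorial (2*n+1) : ℚ) / (((n:ℚ)+1) * (Nat.factorial n : ℚ)) := by
    rw [eq_div_iff (by positivity)]
    linear_combination hq
  rw [hp]
  field_simp

theorem g_ne (n : ℕ) : g (n+1) ≠ 0 := by
  rw [g_eq]
  positivity

theorem g_ratio (m : ℕ) :
    ((m : ℚ) + 1) * g (m+2) = 2 * (2*(m:ℚ)+3) * g (m+1) := by
  rw [g_eq, g_eq]
  rw [show 2*(m+1)+1 = ((2*m+1)+1)+1 by ring, Nat.factorial_succ ((2*m+1)+1),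
      Nat.factorial_succ (2*m+1), Nat.factorial_succ m]
  have h0 : (Nat.factorial m : ℚ) ≠ 0 := Nat.cast_ne_zero.mpr (Nat.factorial_ne_zero m)
  have h1 : (Nat.factorial (2*m+1) : ℚ) ≠ 0 := Nat.cast_ne_zero.mpr (Nat.factorial_ne_zero _)
  push_cast
  field_simp
  ring

theorem Pkj_recurrence (k j : ℕ) (hj : 1 ≤ j) :
    Pkj (k + 1) j = (j : ℚ) ^ 2 * (Pkj k j - Pkj k (j - 1)) + (j : ℚ) * Pkj k (j - 1) := by
  obtain ⟨n, rfl⟩ : ∃ n, j = n + 1 := ⟨j - 1, by omega⟩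
  rcases n with _ | m
  · -- j = 1
    norm_num [Pkj, S, g]
  · -- j = m + 2
    have hkey := S_key k (m+1)
    have hratio := g_ratio m
    have hg2 : g (m+2) ≠ 0 := g_ne (m+1)
    have hg1 : g (m+1) ≠ 0 := g_ne m
    have hkeyQ : (S (k+1) (m+2) : ℚ) + 2*((m:ℚ)+2)*(2*(m:ℚ)+3) * (S k (m+1) : ℚ)
        = ((m:ℚ)+2)^2 * (S k (m+2) : ℚ) := by
      exact_mod_cast congrArg (Nat.cast : ℕ → ℚ) hkey
    simp only [Pkj, Nat.add_sub_cancel, Nat.add_eq_zero, and_false, if_false,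
      Nat.succ_ne_zero, show m+1+1 = m+2 from rfl]
    push_cast
    field_simp
    linear_combination g (m+1) * hkeyQ + (((m:ℚ)+2) * (S k (m+1) : ℚ)) * hratio
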